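/- For all real parameters a > 0, b > 1, T > 0, every integer n ≥ 1, and every χ ∈ [0, s_n(b,T)], one has |G_{a,b,T}(χ)| ≤ a·T·b^{n−1}. -/

import Mathlib

open Real Filter Set

/-- Breakpoints `s_n(b,T) = T·π·(b^n − 1)/(b − 1)`. -/
noncomputable def brk (b T : ℝ) (n : ℕ) : ℝ := T * Real.pi * (b ^ n - 1) / (b - 1)

/-- Index of the segment containing `x ≥ 0`: the unique `m` with `s_m ≤ x < s_{m+1}`
(for `b > 1`, `T > 0`). -/
noncomputable def seg (b T x : ℝ) : ℕ := sInf {n : ℕ | x < brk b T (n + 1)}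

/-- The saturated Nussbaum function `N_{a,b,T}`: on `[s_{n−1}, s_n)` (with `m = n − 1`)
it equals `(−1)^m·a·cos((χ − s_m)/(b^m·T))`, extended evenly to `χ < 0`. -/
noncomputable def satN (a b T : ℝ) (χ : ℝ) : ℝ :=
  (-1 : ℝ) ^ (seg b T |χ|) * a *
    Real.cos ((|χ| - brk b T (seg b T |χ|)) / (b ^ (seg b T |χ|) * T))

/-- The integrated function `G_{a,b,T}(χ) = ∫_0^χ N_{a,b,T}(τ) dτ`. -/
noncomputable def satG (a b T : ℝ) (χ : ℝ) : ℝ := ∫ τ in (0:ℝ)..χ, satN a b T τ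

section Aux

variable {a b T : ℝ}

lemma brk_zero : brk b T 0 = 0 := by simp [brk]

lemma brk_succ (hb : 1 < b) (T : ℝ) (m : ℕ) :
    brk b T (m + 1) = brk b T m + Real.pi * T * b ^ m := by
  have h : b - 1 ≠ 0 := by linarith
  simp only [brk]
  rw [div_add' _ _ _ h, pow_succ]
  congr 1
  ring

lemma brk_lt (hb : 1 < b) (hT : 0 < T) (m : ℕ) : brk b T m < brk b T (m + 1) := by
  have hb0 : (0:ℝ) < b := by linarith
  have h : 0 < Real.pi * T * b ^ m := by positivity
  rw [brk_succ hb]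
  linarith

lemma brk_mono (hb : 1 < b) (hT : 0 < T) : StrictMono (brk b T) :=
  strictMono_nat_of_lt_succ (brk_lt hb hT)

lemma brk_nonneg (hb : 1 < b) (hT : 0 < T) (m : ℕ) : 0 ≤ brk b T m := by
  have := (brk_mono hb hT).monotone (Nat.zero_le m)
  rwa [brk_zero] at this

lemma seg_eq (hb : 1 < b) (hT : 0 < T) {m : ℕ} {x : ℝ}
    (h1 : brk b T m ≤ x) (h2 : x < brk b T (m + 1)) : seg b T x = m := by
  have hmem : m ∈ {n : ℕ | x < brk b T (n + 1)} := h2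
  refine le_antisymm (Nat.sInf_le hmem) ?_
  by_contra hlt
  push_neg at hlt
  have hmem' := Nat.sInf_mem (⟨m, hmem⟩ : Set.Nonempty {n : ℕ | x < brk b T (n + 1)})
  have hle : brk b T (sInf {n : ℕ | x < brk b T (n + 1)} + 1) ≤ brk b T m :=
    (brk_mono hb hT).monotone hlt
  have : x < brk b T m := lt_of_lt_of_le hmem' hle
  linarith

lemma satN_eq (hb : 1 < b) (hT : 0 < T) {m : ℕ} {x : ℝ}
    (h1 : brk b T m ≤ x) (h2 : x < brk b T (m + 1)) :
    satN a b T x = (-1:ℝ) ^ m * a * Real.cos ((x - brk b T m) / (b ^ m * T)) := by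
  have hx0 : 0 ≤ x := le_trans (brk_nonneg hb hT m) h1
  rw [satN, abs_of_nonneg hx0, seg_eq hb hT h1 h2]

lemma intF (hb : 1 < b) (hT : 0 < T) (a : ℝ) (m : ℕ) (u v : ℝ) :
    (∫ x in u..v, (-1:ℝ) ^ m * a * Real.cos ((x - brk b T m) / (b ^ m * T)))
      = (-1:ℝ) ^ m * a * (b ^ m * T) *
        (Real.sin ((v - brk b T m) / (b ^ m * T))
          - Real.sin ((u - brk b T m) / (b ^ m * T))) := by
  have hb0 : (0:ℝ) < b := by linarith
  have hc : (0:ℝ) < b ^ m * T := by positivity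
  set c := b ^ m * T with hcdef
  set s := brk b T m with hsdef
  have hd : ∀ x : ℝ, HasDerivAt (fun x => ((-1:ℝ) ^ m * a * c) * Real.sin ((x - s) / c))
      ((-1:ℝ) ^ m * a * Real.cos ((x - s) / c)) x := by
    intro x
    have h1 : HasDerivAt (fun x : ℝ => (x - s) / c) (1 / c) x := by
      simpa using ((hasDerivAt_id x).sub_const s).div_const c
    have h2 := (Real.hasDerivAt_sin ((x - s) / c)).comp x h1
    have h3 := h2.const_mul ((-1:ℝ) ^ m * a * c)
    refine h3.congr_deriv ?_
    have hc' : c ≠ 0 := hc.ne'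
    field_simp
  have hcont : Continuous fun x : ℝ => (-1:ℝ) ^ m * a * Real.cos ((x - s) / c) := by
    fun_prop
  rw [intervalIntegral.integral_eq_sub_of_hasDerivAt (fun x _ => hd x)
    (hcont.intervalIntegrable u v)]
  ring

lemma satN_ae (hb : 1 < b) (hT : 0 < T) (a : ℝ) (m : ℕ) {χ : ℝ}
    (h1 : brk b T m ≤ χ) (h2 : χ ≤ brk b T (m + 1)) :
    ∀ᵐ x, x ∈ Set.uIoc (brk b T m) χ →
      satN a b T x = (-1:ℝ) ^ m * a * Real.cos ((x - brk b T m) / (b ^ m * T)) := by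
  have h0 : ∀ᵐ x : ℝ, x ≠ brk b T (m + 1) := by
    rw [MeasureTheory.ae_iff]
    simp only [ne_eq, not_not, Set.setOf_eq_eq_singleton]
    exact Real.volume_singleton
  filter_upwards [h0] with x hx hxI
  rw [Set.uIoc_of_le h1] at hxI
  obtain ⟨hl, hr⟩ := hxI
  exact satN_eq hb hT hl.le (lt_of_le_of_ne (hr.trans h2) hx)

lemma satN_intble (hb : 1 < b) (hT : 0 < T) (a : ℝ) (m : ℕ) {χ : ℝ}
    (h1 : brk b T m ≤ χ) (h2 : χ ≤ brk b T (m + 1)) :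
    IntervalIntegrable (satN a b T) MeasureTheory.volume (brk b T m) χ := by
  have hcont : Continuous fun x : ℝ =>
      (-1:ℝ) ^ m * a * Real.cos ((x - brk b T m) / (b ^ m * T)) := by fun_prop
  refine (hcont.intervalIntegrable _ _).congr_ae ?_
  refine (MeasureTheory.ae_restrict_iff' measurableSet_uIoc).mpr ?_
  exact (satN_ae hb hT a m h1 h2).mono fun x h hx => (h hx).symm

lemma satN_int_eq (hb : 1 < b) (hT : 0 < T) (a : ℝ) (m : ℕ) {χ : ℝ}
    (h1 : brk b T m ≤ χ) (h2 : χ ≤ brk b T (m + 1)) :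
    (∫ x in (brk b T m)..χ, satN a b T x)
      = (-1:ℝ) ^ m * a * (b ^ m * T) * Real.sin ((χ - brk b T m) / (b ^ m * T)) := by
  rw [intervalIntegral.integral_congr_ae (satN_ae hb hT a m h1 h2), intF hb hT a m]
  simp

lemma satG_brk (hb : 1 < b) (hT : 0 < T) (a : ℝ) (m : ℕ) :
    IntervalIntegrable (satN a b T) MeasureTheory.volume 0 (brk b T m) ∧
      satG a b T (brk b T m) = 0 := by
  induction m with
  | zero =>
      rw [brk_zero]
      exact ⟨IntervalIntegrable.refl, by simp [satG]⟩
  | succ m ih =>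
      have hb0 : (0:ℝ) < b := by linarith
      have hc : b ^ m * T ≠ 0 := by positivity
      have hseg : IntervalIntegrable (satN a b T) MeasureTheory.volume
          (brk b T m) (brk b T (m + 1)) :=
        satN_intble hb hT a m (brk_lt hb hT m).le le_rfl
      refine ⟨ih.1.trans hseg, ?_⟩
      have hadd := intervalIntegral.integral_add_adjacent_intervals ih.1 hseg
      have hI : (∫ x in (brk b T m)..(brk b T (m + 1)), satN a b T x) = 0 := by
        rw [satN_int_eq hb hT a m (brk_lt hb hT m).le le_rfl]
        have harg : (brk b T (m + 1) - brk b T m) / (b ^ m * T) = Real.pi := by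
          rw [brk_succ hb]
          field_simp
          ring
        rw [harg, Real.sin_pi, mul_zero]
      have ih2 := ih.2
      rw [satG] at ih2 ⊢
      rw [← hadd, ih2, hI, add_zero]

lemma bound_seg (hb : 1 < b) (hT : 0 < T) (ha : 0 < a) (m : ℕ) {χ : ℝ}
    (h1 : brk b T m ≤ χ) (h2 : χ ≤ brk b T (m + 1)) :
    |satG a b T χ| ≤ a * T * b ^ m := by
  have hb0 : (0:ℝ) < b := by linarith
  have hc : (0:ℝ) < b ^ m * T := by positivity
  have hseg : IntervalIntegrable (satN a b T) MeasureTheory.volume (brk b T m) χ :=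
    satN_intble hb hT a m h1 h2
  have hadd := intervalIntegral.integral_add_adjacent_intervals (satG_brk hb hT a m).1 hseg
  have hG : satG a b T χ
      = (-1:ℝ) ^ m * a * (b ^ m * T) * Real.sin ((χ - brk b T m) / (b ^ m * T)) := by
    have h0 := (satG_brk hb hT a m).2
    rw [satG] at h0 ⊢
    rw [← hadd, h0, zero_add, satN_int_eq hb hT a m h1 h2]
  rw [hG]
  have habs : |(-1:ℝ) ^ m * a * (b ^ m * T) * Real.sin ((χ - brk b T m) / (b ^ m * T))|
      = a * (b ^ m * T) * |Real.sin ((χ - brk b T m) / (b ^ m * T))| := by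
    rw [abs_mul, abs_mul, abs_mul, abs_pow, abs_neg, abs_one, one_pow, one_mul,
      abs_of_pos ha, abs_of_pos hc]
  rw [habs]
  have hs : |Real.sin ((χ - brk b T m) / (b ^ m * T))| ≤ 1 :=
    abs_le.mpr ⟨Real.neg_one_le_sin _, Real.sin_le_one _⟩
  calc a * (b ^ m * T) * |Real.sin ((χ - brk b T m) / (b ^ m * T))|
      ≤ a * (b ^ m * T) * 1 := by
        exact mul_le_mul_of_nonneg_left hs (by positivity)
    _ = a * T * b ^ m := by ring

end Aux

/-- `|G_{a,b,T}(χ)| ≤ a·T·b^{n−1}` on `[0, s_n]`, `n ≥ 1`. -/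
theorem satG_bound (a b T : ℝ) (ha : 0 < a) (hb : 1 < b) (hT : 0 < T)
    (n : ℕ) (hn : 1 ≤ n) (χ : ℝ) (hχ : χ ∈ Set.Icc (0 : ℝ) (brk b T n)) :
    |satG a b T χ| ≤ a * T * b ^ (n - 1) := by
  have hb0 : (0:ℝ) < b := by linarith
  obtain ⟨k, rfl⟩ : ∃ k, n = k + 1 := ⟨n - 1, (Nat.succ_pred_eq_of_pos hn).symm⟩
  simp only [Nat.add_sub_cancel]
  clear hn
  induction k generalizing χ with
  | zero =>
      exact bound_seg hb hT ha 0 (by simpa [brk_zero] using hχ.1) hχ.2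
  | succ k ih =>
      rcases le_or_gt χ (brk b T (k + 1)) with h | h
      · have hkk := ih χ (Set.mem_Icc.mpr ⟨hχ.1, h⟩)
        have hpow : b ^ k ≤ b ^ (k + 1) :=
          pow_le_pow_right₀ hb.le (Nat.le_succ k)
        calc |satG a b T χ| ≤ a * T * b ^ k := hkk
          _ ≤ a * T * b ^ (k + 1) := by
              exact mul_le_mul_of_nonneg_left hpow (by positivity)
      · exact bound_seg hb hT ha (k + 1) h.le hχ.2
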